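/- arXiv:1802.00215 — 2 statements merged into one kernel-verified Lean document; each statement's English description precedes it below -/
import Mathlib

section
/- Suppose W : ℝ → ℝ is piecewise C² with a single jump at 0 (C² away from 0, with one-sided limits of W, W', W'' at 0), and W satisfies W(0+) + W(0-) = 2c with W(0+) ≠ W(0-), and the equation (W(ξ)-c)W'(ξ) + (K'∗W)(ξ) = 0 for all ξ ≠ 0, where K(x) = (1/2)e^{-|x|}. Then W'(0+) + W'(0-) = 0. -/
open MeasureTheory Real Filter

lemma measurable_realSign : Measurable Real.sign := by
  have : Real.sign = fun r : ℝ => if r < 0 then (-1 : ℝ) else if 0 < r then 1 else 0 :=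
    funext fun r => rfl
  rw [this]
  exact Measurable.ite (measurableSet_lt measurable_id measurable_const)
    measurable_const <| Measurable.ite
      (measurableSet_lt measurable_const measurable_id) measurable_const measurable_const

lemma integrable_exp_neg_abs' : Integrable (fun x : ℝ => Real.exp (-|x|)) := by
  have hIoi : IntegrableOn (fun x : ℝ => Real.exp (-|x|)) (Set.Ioi 0) := by
    refine (exp_neg_integrableOn_Ioi 0 (b := 1) one_pos).congr_fun (fun x hx => ?_)
      measurableSet_Ioi
    rw [abs_of_pos (Set.mem_Ioi.mp hx)]; ring_nf
  have hIic : IntegrableOn (fun x : ℝ => Real.exp (-|x|)) (Set.Iic 0) := by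
    rw [← Measure.map_neg_eq_self (volume : Measure ℝ)]
    have m : MeasurableEmbedding fun x : ℝ => -x := (Homeomorph.neg ℝ).measurableEmbedding
    rw [m.integrableOn_map_iff]
    simp_rw [Function.comp_def, abs_neg, Set.neg_preimage, Set.neg_Iic, neg_zero]
    exact Iff.mpr integrableOn_Ici_iff_integrableOn_Ioi hIoi
  have := hIic.union hIoi
  rwa [Set.Iic_union_Ioi, integrableOn_univ] at this

/-- Suppose `W : ℝ → ℝ` is piecewise `C²` with a single jump at `0`, satisfies the
Rankine-Hugoniot condition `W(0+) + W(0-) = 2c` with `W(0+) ≠ W(0-)`, and satisfies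
`(W(ξ)-c)·W'(ξ) + (K'∗W)(ξ) = 0` for all `ξ ≠ 0`, where `K(x) = (1/2)e^{-|x|}`.
Then `W'(0+) + W'(0-) = 0`. -/
theorem one_sided_derivative_condition (W K' : ℝ → ℝ)
    (hK' : ∀ x, K' x = -(1 / 2) * Real.sign x * Real.exp (-|x|))
    (hWsm : ContDiffOn ℝ 2 W {(0 : ℝ)}ᶜ)
    (hWmeas : Measurable W) (hWbd : ∃ C, ∀ x, |W x| ≤ C)
    (c wp wm dp dm : ℝ)
    (hwp : Tendsto W (nhdsWithin 0 (Set.Ioi 0)) (nhds wp))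
    (hwm : Tendsto W (nhdsWithin 0 (Set.Iio 0)) (nhds wm))
    (hdp : Tendsto (deriv W) (nhdsWithin 0 (Set.Ioi 0)) (nhds dp))
    (hdm : Tendsto (deriv W) (nhdsWithin 0 (Set.Iio 0)) (nhds dm))
    (hRH : wp + wm = 2 * c) (hjump : wp ≠ wm)
    (heq : ∀ ξ : ℝ, ξ ≠ 0 →
      (W ξ - c) * deriv W ξ + (∫ y : ℝ, K' (ξ - y) * W y) = 0) :
    dp + dm = 0 := by
  obtain ⟨C, hC⟩ := hWbd
  have hC0 : 0 ≤ C := (abs_nonneg _).trans (hC 0)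
  -- pointwise bound on K'
  have hKbd : ∀ x, |K' x| ≤ (1 / 2) * Real.exp (-|x|) := by
    intro x
    rw [hK']
    rw [abs_mul, abs_mul]
    have h1 : |Real.sign x| ≤ 1 := by
      rcases Real.sign_apply_eq x with h | h | h <;> rw [h] <;> norm_num
    have h2 : |Real.exp (-|x|)| = Real.exp (-|x|) := abs_of_pos (Real.exp_pos _)
    rw [h2]
    have h3 : |(-(1/2) : ℝ)| = 1/2 := by norm_num
    rw [h3]
    nlinarith [Real.exp_pos (-|x|), abs_nonneg (Real.sign x)]
  -- measurability of K'
  have hKmeas : Measurable K' := by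
    have : K' = fun x => -(1 / 2) * Real.sign x * Real.exp (-|x|) := funext hK'
    rw [this]
    exact ((measurable_const.mul measurable_realSign).mul
      ((measurable_id.abs.neg).exp))
  -- the convolution term
  set F : ℝ → ℝ := fun ξ => ∫ y : ℝ, K' (ξ - y) * W y with hF
  set L : ℝ := ∫ y : ℝ, K' (0 - y) * W y with hL
  -- continuity of F at 0 via dominated convergence
  have hFtendsto : Tendsto F (nhds 0) (nhds L) := by
    apply tendsto_integral_filter_of_dominated_convergence
      (bound := fun y => (1 / 2) * Real.exp 1 * C * Real.exp (-|y|))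
    · filter_upwards with ξ
      exact ((hKmeas.comp ((measurable_const.sub measurable_id))).mul hWmeas).aestronglyMeasurable
    · filter_upwards [eventually_abs_sub_lt (0 : ℝ) one_pos] with ξ hξ
      filter_upwards with y
      rw [Real.norm_eq_abs, abs_mul]
      have h1 : |K' (ξ - y)| ≤ (1/2) * Real.exp (-|ξ - y|) := hKbd _
      have h2 : Real.exp (-|ξ - y|) ≤ Real.exp 1 * Real.exp (-|y|) := by
        rw [← Real.exp_add]
        apply Real.exp_le_exp.mpr
        have : |y| - |ξ - y| ≤ |ξ| := by
          have := abs_sub_abs_le_abs_sub y (y - ξ)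
          simp only [sub_sub_cancel] at this
          rw [abs_sub_comm] at this
          linarith [this]
        rw [sub_zero] at hξ
        linarith
      calc |K' (ξ - y)| * |W y| ≤ ((1/2) * (Real.exp 1 * Real.exp (-|y|))) * C := by
            apply mul_le_mul _ (hC y) (abs_nonneg _) _
            · exact h1.trans (by nlinarith [Real.exp_pos (-|ξ - y|)])
            · positivity
        _ = (1 / 2) * Real.exp 1 * C * Real.exp (-|y|) := by ring
    · exact (integrable_exp_neg_abs'.const_mul _)
    · -- a.e. pointwise convergence
      filter_upwards [compl_mem_ae_iff.mpr (measure_singleton (0 : ℝ))] with y hy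
      have hy0 : y ≠ 0 := fun h => hy (by simp [h])
      have hcont : ContinuousAt K' (-y) := by
        have hform : K' = fun x => -(1 / 2) * Real.sign x * Real.exp (-|x|) := funext hK'
        rw [hform]
        apply ContinuousAt.mul
        · apply ContinuousAt.mul continuousAt_const
          rcases lt_or_gt_of_ne (neg_ne_zero.mpr hy0) with h | h
          · have : ∀ᶠ x in nhds (-y), Real.sign x = -1 := by
              filter_upwards [eventually_lt_nhds h] with x hx using Real.sign_of_neg hx
            exact Tendsto.congr' (by filter_upwards [this] with x hx using hx.symm)
              (by rw [Real.sign_of_neg h]; exact tendsto_const_nhds)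
          · have : ∀ᶠ x in nhds (-y), Real.sign x = 1 := by
              filter_upwards [eventually_gt_nhds h] with x hx using Real.sign_of_pos hx
            exact Tendsto.congr' (by filter_upwards [this] with x hx using hx.symm)
              (by rw [Real.sign_of_pos h]; exact tendsto_const_nhds)
        · exact (Real.continuous_exp.comp (continuous_abs.neg)).continuousAt
      have : Tendsto (fun ξ => ξ - y) (nhds (0:ℝ)) (nhds (0 - y)) :=
        (continuous_id.sub continuous_const).tendsto 0
      rw [zero_sub] at this
      exact (Tendsto.mul (hcont.tendsto.comp this) tendsto_const_nhds).congr
        (fun ξ => rfl) |>.congr' (by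
          filter_upwards with ξ; rfl) |>.congr (fun ξ => rfl) |>.mono_right
          (le_of_eq (by rw [zero_sub]))
  -- limits of the equation from each side
  have hplus : (wp - c) * dp + L = 0 := by
    have h1 : Tendsto (fun ξ => (W ξ - c) * deriv W ξ + F ξ)
        (nhdsWithin 0 (Set.Ioi 0)) (nhds ((wp - c) * dp + L)) :=
      (((hwp.sub tendsto_const_nhds).mul hdp).add (hFtendsto.mono_left nhdsWithin_le_nhds))
    have h2 : Tendsto (fun ξ => (W ξ - c) * deriv W ξ + F ξ)
        (nhdsWithin 0 (Set.Ioi 0)) (nhds 0) := by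
      apply Tendsto.congr' _ tendsto_const_nhds
      filter_upwards [self_mem_nhdsWithin] with ξ hξ
      exact (heq ξ (ne_of_gt hξ)).symm
    exact tendsto_nhds_unique h1 h2
  have hminus : (wm - c) * dm + L = 0 := by
    have h1 : Tendsto (fun ξ => (W ξ - c) * deriv W ξ + F ξ)
        (nhdsWithin 0 (Set.Iio 0)) (nhds ((wm - c) * dm + L)) :=
      (((hwm.sub tendsto_const_nhds).mul hdm).add (hFtendsto.mono_left nhdsWithin_le_nhds))
    have h2 : Tendsto (fun ξ => (W ξ - c) * deriv W ξ + F ξ)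
        (nhdsWithin 0 (Set.Iio 0)) (nhds 0) := by
      apply Tendsto.congr' _ tendsto_const_nhds
      filter_upwards [self_mem_nhdsWithin] with ξ hξ
      exact (heq ξ (ne_of_lt hξ)).symm
    exact tendsto_nhds_unique h1 h2
  -- algebra
  have hwpc : wp - c ≠ 0 := by
    intro h
    apply hjump
    linarith
  have hwmc : (wm - c) * dm = -((wp - c) * dm) := by
    have : wm - c = -(wp - c) := by linarith
    rw [this]; ring
  have key : (wp - c) * (dp + dm) = 0 := by
    have hexp : (wp - c) * (dp + dm) = (wp - c) * dp + (wp - c) * dm := by ring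
    linarith [hplus, hminus, hwmc, hexp]
  exact (mul_eq_zero.mp key).resolve_left hwpc
end

section
/- The function H(U,V) = (U-c)²·(V² - U²/4 + ((3c-4)/6)U + α - c²/4 - c/3) is a first integral of the planar system U' = (U-c)V, V' = -V² + U²/2 + (1-c)U + c²/2 - α; that is, for any C¹ solution (U(z),V(z)), the function z ↦ H(U(z),V(z)) is constant. Equivalently, ∇H(U,V)·F(U,V) = 0 for all (U,V) ∈ ℝ², where F(U,V) = ((U-c)V, -V² + U²/2 + (1-c)U + c²/2 - α). -/
/-- `H(U,V) = (U-c)²·(V² - U²/4 + ((3c-4)/6)U + α - c²/4 - c/3)` is a first integral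
of the system `U' = (U-c)V`, `V' = -V² + U²/2 + (1-c)U + c²/2 - α`: along any `C¹`
solution `(U(z), V(z))`, the function `z ↦ H(U(z), V(z))` is constant. -/
theorem first_integral (c α : ℝ) (H : ℝ → ℝ → ℝ)
    (hH : ∀ U V, H U V = (U - c) ^ 2 *
      (V ^ 2 - U ^ 2 / 4 + (3 * c - 4) / 6 * U + α - c ^ 2 / 4 - c / 3))
    (U V : ℝ → ℝ)
    (hU : ∀ z, HasDerivAt U ((U z - c) * V z) z)
    (hV : ∀ z, HasDerivAt V
      (-(V z) ^ 2 + (U z) ^ 2 / 2 + (1 - c) * U z + c ^ 2 / 2 - α) z) :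
    ∀ z₁ z₂ : ℝ, H (U z₁) (V z₁) = H (U z₂) (V z₂) := by
  have key : ∀ z, HasDerivAt (fun z => H (U z) (V z)) 0 z := by
    intro z
    have h1 : (fun z => H (U z) (V z)) = fun z =>
        (U z - c) ^ 2 * ((V z) ^ 2 - (U z) ^ 2 / 4 + (3 * c - 4) / 6 * U z
          + α - c ^ 2 / 4 - c / 3) := by
      funext z; rw [hH]
    rw [h1]
    have hd := ((hU z).sub_const c).pow 2 |>.mul
      (((((((hV z).pow 2).sub (((hU z).pow 2).div_const 4)).add
        ((hU z).const_mul ((3 * c - 4) / 6))).add_const α).sub_const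
        (c ^ 2 / 4)).sub_const (c / 3))
    convert hd using 1
    · rfl
    · rfl
    · funext x; simp only [Pi.pow_apply, Pi.mul_apply, Pi.sub_apply, Pi.add_apply]
    · simp only [Pi.pow_apply, Pi.sub_apply, Pi.add_apply]; push_cast; ring
  intro z₁ z₂
  have : ∀ z, deriv (fun z => H (U z) (V z)) z = 0 := fun z => (key z).deriv
  have hc := is_const_of_deriv_eq_zero (fun z => (key z).differentiableAt) this
  exact hc z₁ z₂
end
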